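/- Let R be a commutative ring and T a silting R-module with respect to a projective presentation P₋₁ →σ P₀ → T → 0 (so Gen T = D_σ). Then: the character modules P₀⁺ and P₋₁⁺ are injective R-modules; the kernel of σ⁺ : P₀⁺ → P₋₁⁺ is isomorphic to T⁺; and Cogen(T⁺) = C_{σ⁺}. Hence T⁺ is a cosilting R-module with respect to the injective copresentation 0 → T⁺ → P₀⁺ →σ⁺ P₋₁⁺. -/

import Mathlib

set_option synthInstance.maxHeartbeats 1000000
set_option maxHeartbeats 1600000
universe u
open CharacterModule

/-- `M ∈ D_σ`: every `R`-linear map `A → M` factors through `σ : A → B`. -/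
def MemD {R : Type u} [Ring R] {A B : Type u} [AddCommGroup A] [Module R A]
    [AddCommGroup B] [Module R B] (σ : A →ₗ[R] B)
    (M : Type u) [AddCommGroup M] [Module R M] : Prop :=
  ∀ f : A →ₗ[R] M, ∃ g : B →ₗ[R] M, g.comp σ = f

/-- `X ∈ C_λ`: every `R`-linear map `X → E₁` factors through `λ : E₀ → E₁`. -/
def MemC {R : Type u} [Ring R] {E₀ E₁ : Type u} [AddCommGroup E₀] [Module R E₀]
    [AddCommGroup E₁] [Module R E₁] (lam : E₀ →ₗ[R] E₁)
    (X : Type u) [AddCommGroup X] [Module R X] : Prop :=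
  ∀ f : X →ₗ[R] E₁, ∃ g : X →ₗ[R] E₀, lam.comp g = f

/-- `M ∈ Gen T`: `M` is an epimorphic image of a direct sum of copies of `T`. -/
def MemGen (R : Type u) [Ring R] (T : Type u) [AddCommGroup T] [Module R T]
    (M : Type u) [AddCommGroup M] [Module R M] : Prop :=
  ∃ (ι : Type u) (g : (ι →₀ T) →ₗ[R] M), Function.Surjective g

/-- `M ∈ Cogen C`: `M` embeds into a direct product of copies of `C`. -/
def MemCogen (R : Type u) [Ring R] (C : Type u) [AddCommGroup C] [Module R C]
    (M : Type u) [AddCommGroup M] [Module R M] : Prop :=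
  ∃ (ι : Type u) (g : M →ₗ[R] (ι → C)), Function.Injective g


section aux
variable {R : Type u} [CommRing R]

lemma dual_injective_of_surjective {A B : Type u} [AddCommGroup A] [Module R A]
    [AddCommGroup B] [Module R B] (f : A →ₗ[R] B) (hf : Function.Surjective f) :
    Function.Injective (CharacterModule.dual (R := R) f) := by
  intro c c' h
  ext b
  obtain ⟨a, rfl⟩ := hf b
  exact congrFun (congrArg (fun (x : CharacterModule A) => (x : A → _)) h) a

/-- Transpose of a map into a character module. -/
def charFlip {A B : Type u} [AddCommGroup A] [Module R A] [AddCommGroup B] [Module R B]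
    (f : A →ₗ[R] CharacterModule B) : B →ₗ[R] CharacterModule A where
  toFun b :=
    { toFun := fun a => f a b
      map_zero' := by show f 0 b = 0; rw [map_zero]; rfl
      map_add' := fun a a' => by show f (a + a') b = f a b + f a' b; rw [map_add]; rfl }
  map_add' b b' := by ext a; exact map_add (f a) b b'
  map_smul' r b := by
    ext a
    show f a (r • b) = f (r • a) b
    rw [f.map_smul]
    rfl

@[simp] lemma charFlip_apply {A B : Type u} [AddCommGroup A] [Module R A] [AddCommGroup B]
    [Module R B] (f : A →ₗ[R] CharacterModule B) (b : B) (a : A) :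
    charFlip f b a = f a b := rfl

/-- Evaluation map into the double character module. -/
def evalChar (A : Type u) [AddCommGroup A] [Module R A] :
    A →ₗ[R] CharacterModule (CharacterModule A) :=
  charFlip (LinearMap.id : CharacterModule A →ₗ[R] CharacterModule A)

lemma evalChar_injective (A : Type u) [AddCommGroup A] [Module R A] :
    Function.Injective (evalChar (R := R) A) := by
  intro a a' h
  rw [← sub_eq_zero]
  apply CharacterModule.eq_zero_of_character_apply
  intro c
  have := congrFun (congrArg (fun (x : CharacterModule (CharacterModule A)) => (x : _ → _)) h) c
  simp only [evalChar, charFlip_apply, LinearMap.id_apply] at this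
  rw [map_sub, this, sub_self]

end aux

section finsupp
variable {R : Type u} [CommRing R] {ι T : Type u} [AddCommGroup T] [Module R T]

/-- Pack a family of characters of `T` into a character of `ι →₀ T`. -/
noncomputable def piToChar (v : ι → CharacterModule T) : CharacterModule (ι →₀ T) :=
  Finsupp.liftAddHom (fun i => (v i : T →+ AddCircle (1 : ℚ)))

lemma piToChar_single (v : ι → CharacterModule T) (i : ι) (t : T) :
    piToChar (T := T) v (Finsupp.single i t) = v i t :=
  Finsupp.liftAddHom_apply_single _ i t

/-- `piToChar` as a linear map. -/
noncomputable def piToCharₗ : (ι → CharacterModule T) →ₗ[R] CharacterModule (ι →₀ T) where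
  toFun := piToChar
  map_add' v w := by
    refine Finsupp.addHom_ext fun i t => ?_
    show piToChar (v + w) (Finsupp.single i t)
      = piToChar v (Finsupp.single i t) + piToChar w (Finsupp.single i t)
    rw [piToChar_single, piToChar_single, piToChar_single]
    rfl
  map_smul' r v := by
    refine Finsupp.addHom_ext fun i t => ?_
    show piToChar (r • v) (Finsupp.single i t) = (r • piToChar v) (Finsupp.single i t)
    rw [piToChar_single, CharacterModule.smul_apply, Finsupp.smul_single, piToChar_single]
    rfl

lemma piToChar_injective : Function.Injective (piToCharₗ (R := R) (ι := ι) (T := T)) := by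
  intro v w h
  have h' : piToChar v = piToChar (T := T) w := h
  funext i
  ext t
  have := DFunLike.congr_fun h' (Finsupp.single i t)
  rwa [piToChar_single, piToChar_single] at this

/-- Unpack a character of `ι →₀ T` into a family of characters of `T`. -/
noncomputable def charToPi : CharacterModule (ι →₀ T) →ₗ[R] (ι → CharacterModule T) where
  toFun c i := c.comp (Finsupp.singleAddHom i)
  map_add' c c' := rfl
  map_smul' r c := by
    funext i
    ext t
    show c (r • Finsupp.single i t) = c (Finsupp.single i (r • t))
    rw [Finsupp.smul_single]

lemma charToPi_injective : Function.Injective (charToPi (R := R) (ι := ι) (T := T)) := by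
  intro c c' h
  refine Finsupp.addHom_ext fun i t => ?_
  exact congrFun (congrArg (fun (x : CharacterModule T) => (x : T → _))
    (congrFun h i)) t

end finsupp

section eta
variable {R : Type u} [CommRing R]
open TensorProduct

/-- The natural map `P ⊗ M⁺ → Hom(P, M)⁺`, `p ⊗ χ ↦ (f ↦ χ (f p))`. -/
noncomputable def eta (P M : Type u) [AddCommGroup P] [Module R P] [AddCommGroup M]
    [Module R M] : P ⊗[R] CharacterModule M →ₗ[R] CharacterModule (P →ₗ[R] M) :=
  TensorProduct.lift
  { toFun := fun p =>
      { toFun := fun χ =>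
          { toFun := fun f => χ (f p)
            map_zero' := by show χ ((0 : P →ₗ[R] M) p) = 0; rw [LinearMap.zero_apply, map_zero]
            map_add' := fun f g => by
              show χ ((f + g) p) = χ (f p) + χ (g p)
              rw [LinearMap.add_apply, map_add] }
        map_add' := fun χ χ' => rfl
        map_smul' := fun r χ => by
          ext f
          show χ (r • f p) = χ ((r • f) p)
          rw [LinearMap.smul_apply] }
    map_add' := fun p p' => by
      ext χ f
      show χ (f (p + p')) = χ (f p) + χ (f p')
      rw [map_add, map_add]
    map_smul' := fun r p => by
      ext χ f
      show χ (f (r • p)) = χ ((r • f) p)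
      rw [LinearMap.smul_apply, map_smul] }

@[simp] lemma eta_apply_tmul (P M : Type u) [AddCommGroup P] [Module R P] [AddCommGroup M]
    [Module R M] (p : P) (χ : CharacterModule M) (f : P →ₗ[R] M) :
    eta P M (p ⊗ₜ[R] χ) f = χ (f p) := rfl

lemma eta_free_injective (κ M : Type u) [AddCommGroup M] [Module R M] :
    Function.Injective (eta (R := R) (κ →₀ R) M) := by
  classical
  have key : ∀ (t : (κ →₀ R) ⊗[R] CharacterModule M) (k : κ) (m : M),
      eta (R := R) (κ →₀ R) M t ((LinearMap.toSpanSingleton R M m).comp (Finsupp.lapply k)) =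
      (TensorProduct.finsuppScalarLeft R (CharacterModule M) κ t k) m := by
    intro t
    refine t.induction_on ?_ ?_ ?_
    · intro k m
      rw [map_zero, (TensorProduct.finsuppScalarLeft R (CharacterModule M) κ).map_zero]
      rfl
    · intro p χ k m
      rw [eta_apply_tmul, TensorProduct.finsuppScalarLeft_apply_tmul_apply]
      rfl
    · intro x y hx hy k m
      rw [map_add, map_add]
      show eta _ M x _ + eta _ M y _ = _
      rw [hx, hy]
      rfl
  intro t t' h
  apply (TensorProduct.finsuppScalarLeft R (CharacterModule M) κ).injective
  ext k t0
  have := key t k t0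
  rw [h, key t' k t0] at this
  exact this.symm
end eta

section etaproj
variable {R : Type u} [CommRing R]
open TensorProduct LinearMap

lemma eta_injective (P M : Type u) [AddCommGroup P] [Module R P] [AddCommGroup M] [Module R M]
    [Module.Projective R P] : Function.Injective (eta (R := R) P M) := by
  obtain ⟨s, hs⟩ := Module.projective_def'.mp (inferInstance : Module.Projective R P)
  have hsInj : Function.Injective (s.rTensor (CharacterModule M)) := by
    have h0 : ((Finsupp.linearCombination R id).rTensor (CharacterModule M)).comp
        (s.rTensor (CharacterModule M)) = LinearMap.id := by
      rw [← LinearMap.rTensor_comp, hs, LinearMap.rTensor_id]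
    exact Function.LeftInverse.injective
      (g := ((Finsupp.linearCombination R id).rTensor (CharacterModule M)))
      (fun z => DFunLike.congr_fun h0 z)
  have square : (CharacterModule.dual (s.lcomp R M)).comp (eta P M)
      = (eta (P →₀ R) M).comp (s.rTensor (CharacterModule M)) := by
    apply TensorProduct.ext'
    intro p χ
    ext f
    rfl
  intro x y hxy
  apply hsInj
  apply eta_free_injective (R := R) P M
  have h1 := congrArg (CharacterModule.dual (s.lcomp R M)) hxy
  have h2 : ((eta (P →₀ R) M).comp (s.rTensor (CharacterModule M))) x
      = ((eta (P →₀ R) M).comp (s.rTensor (CharacterModule M))) y := by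
    rw [← square]; exact h1
  exact h2

lemma memC_char_of_memD {P₁ P₀ M : Type u} [AddCommGroup P₁] [Module R P₁]
    [AddCommGroup P₀] [Module R P₀] [AddCommGroup M] [Module R M]
    [Module.Projective R P₁] (σ : P₁ →ₗ[R] P₀) (hM : MemD σ M) :
    MemC (CharacterModule.dual σ) (CharacterModule M) := by
  have hL : Function.Surjective (σ.lcomp R M) := by
    intro f
    obtain ⟨g, hg⟩ := hM f
    exact ⟨g, hg⟩
  have hdual : Function.Injective (CharacterModule.dual (σ.lcomp R M)) :=
    _root_.dual_injective_of_surjective _ hL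
  have square : (CharacterModule.dual (σ.lcomp R M)).comp (eta P₁ M)
      = (eta P₀ M).comp (σ.rTensor (CharacterModule M)) := by
    apply TensorProduct.ext'
    intro p χ
    ext f
    rfl
  have hrT : Function.Injective (σ.rTensor (CharacterModule M)) := by
    intro x y hxy
    apply eta_injective P₁ M
    apply hdual
    have : ((eta P₀ M).comp (σ.rTensor (CharacterModule M))) x
        = ((eta P₀ M).comp (σ.rTensor (CharacterModule M))) y := by
      simpa using congrArg (eta P₀ M) hxy
    rw [← square] at this
    exact this
  have hlT : Function.Injective (σ.lTensor (CharacterModule M)) := by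
    rw [← LinearMap.comm_comp_rTensor_comp_comm_eq (Q := CharacterModule M) σ]
    simp only [LinearMap.coe_comp, LinearEquiv.coe_coe]
    exact ((TensorProduct.comm R P₀ (CharacterModule M)).injective.comp hrT).comp
      (TensorProduct.comm R (CharacterModule M) P₁).injective
  have hdl : Function.Surjective (CharacterModule.dual (σ.lTensor (CharacterModule M))) :=
    CharacterModule.dual_surjective_of_injective _ hlT
  intro f
  obtain ⟨d, hd⟩ := hdl (CharacterModule.homEquiv f)
  refine ⟨CharacterModule.curry d, ?_⟩
  ext x p₁
  show CharacterModule.curry d x (σ p₁) = f x p₁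
  have : d ((σ.lTensor (CharacterModule M)) (x ⊗ₜ[R] p₁)) = CharacterModule.homEquiv f (x ⊗ₜ[R] p₁) :=
    DFunLike.congr_fun hd (x ⊗ₜ[R] p₁)
  rw [LinearMap.lTensor_tmul] at this
  exact this.trans rfl
end etaproj

/-- If `T` is silting with respect to the projective presentation
`P₋₁ →σ P₀ →π T → 0`, then `T⁺` is cosilting with respect to the injective
copresentation `0 → T⁺ →π⁺ P₀⁺ →σ⁺ P₋₁⁺`, and `Cogen T⁺ = C_{σ⁺}`. -/
theorem stmt_7 {R : Type u} [CommRing R]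
    (P₁ P₀ T : Type u) [AddCommGroup P₁] [Module R P₁] [AddCommGroup P₀] [Module R P₀]
    [AddCommGroup T] [Module R T]
    [Module.Projective R P₁] [Module.Projective R P₀]
    (σ : P₁ →ₗ[R] P₀) (π : P₀ →ₗ[R] T)
    (hsurj : Function.Surjective π) (hexact : LinearMap.ker π = LinearMap.range σ)
    (hsilting : ∀ (M : Type u) [AddCommGroup M] [Module R M], MemGen R T M ↔ MemD σ M) :
    Module.Injective R (CharacterModule P₀) ∧
    Module.Injective R (CharacterModule P₁) ∧
    Function.Injective (CharacterModule.dual π) ∧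
    LinearMap.ker (CharacterModule.dual σ) = LinearMap.range (CharacterModule.dual π) ∧
    ∀ (X : Type u) [AddCommGroup X] [Module R X],
      MemCogen R (CharacterModule T) X ↔ MemC (CharacterModule.dual σ) X := by
  have hinj0 : Module.Injective R (CharacterModule P₀) :=
    (Module.Flat.iff_characterModule_injective).mp inferInstance
  have hinj1 : Module.Injective R (CharacterModule P₁) :=
    (Module.Flat.iff_characterModule_injective).mp inferInstance
  refine ⟨hinj0, hinj1, _root_.dual_injective_of_surjective π hsurj, ?_, ?_⟩
  · -- exactness of the dual sequence
    ext c
    simp only [LinearMap.mem_ker, LinearMap.mem_range]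
    constructor
    · intro hc
      have hker : ∀ x : P₀, π x = 0 → c x = 0 := by
        intro x hx
        have hx' : x ∈ LinearMap.range σ := hexact ▸ hx
        obtain ⟨p, rfl⟩ := hx'
        exact DFunLike.congr_fun hc p
      set s : T → P₀ := Function.surjInv hsurj with hs
      have hps : ∀ t, π (s t) = t := fun t => Function.surjInv_eq hsurj t
      refine ⟨{ toFun := fun t => c (s t)
                map_zero' := ?_
                map_add' := ?_ }, ?_⟩
      · apply hker
        rw [hps, ]
      · intro t t'
        show c (s (t + t')) = c (s t) + c (s t')
        have h0 : π (s (t + t') - s t - s t') = 0 := by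
          rw [map_sub, map_sub, hps, hps, hps]
          abel
        have := hker _ h0
        rw [map_sub, map_sub, sub_eq_zero, sub_eq_iff_eq_add] at this
        rw [this]
        abel
      · ext x
        show c (s (π x)) = c x
        have h0 : π (s (π x) - x) = 0 := by rw [map_sub, hps, sub_self]
        have := hker _ h0
        rwa [map_sub, sub_eq_zero] at this
    · rintro ⟨ψ, rfl⟩
      ext p₁
      show ψ (π (σ p₁)) = 0
      have : σ p₁ ∈ LinearMap.ker π := by
        rw [hexact]
        exact LinearMap.mem_range_self σ p₁
      rw [LinearMap.mem_ker] at this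
      rw [this, map_zero]
  · intro X _ _
    constructor
    · rintro ⟨I, g, hg⟩ f
      have hMD : MemD σ (I →₀ T) := (hsilting (I →₀ T)).mp ⟨I, LinearMap.id, Function.surjective_id⟩
      set j : X →ₗ[R] CharacterModule (I →₀ T) := (piToCharₗ (R := R) (ι := I) (T := T)).comp g with hj
      have hjinj : Function.Injective j := (piToChar_injective (R := R) (ι := I) (T := T)).comp hg
      obtain ⟨F, hF⟩ := hinj1.out j hjinj f
      obtain ⟨G, hG⟩ := memC_char_of_memD σ hMD F
      refine ⟨G.comp j, ?_⟩
      refine LinearMap.ext fun x => ?_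
      show CharacterModule.dual σ (G (j x)) = f x
      have h1 : CharacterModule.dual σ (G (j x)) = F (j x) := DFunLike.congr_fun hG (j x)
      rw [h1, hF]
    · intro hX
      have hXD : MemD σ (CharacterModule X) := by
        intro f
        obtain ⟨g, hg⟩ := hX (charFlip f)
        refine ⟨charFlip g, ?_⟩
        refine LinearMap.ext fun p₁ => DFunLike.ext _ _ fun x => ?_
        show g x (σ p₁) = f p₁ x
        have h1 : CharacterModule.dual σ (g x) = charFlip f x := DFunLike.congr_fun hg x
        have := DFunLike.congr_fun h1 p₁
        rw [charFlip_apply] at this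
        exact this
      obtain ⟨I, h, hsurjh⟩ := (hsilting (CharacterModule X)).mpr hXD
      refine ⟨I, (charToPi (R := R) (ι := I) (T := T)).comp ((CharacterModule.dual h).comp (evalChar X)), ?_⟩
      exact (charToPi_injective (R := R) (ι := I) (T := T)).comp
        ((_root_.dual_injective_of_surjective h hsurjh).comp (evalChar_injective X))
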